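/- Let n ∈ ℕ, a, μ ∈ ℝ, ρ ≠ 0, H an n×n real symmetric matrix and x ∈ ℝⁿ. Let K be the (2n+1)×(2n+1) symmetric matrix with block form [[H, x, 0],[xᵀ, a, xᵀ],[0, x, H]] (two copies of H attached to a central index v via x). If μ is an eigenvalue of L_H^ρ + D(x) of multiplicity 1 with eigenvector α satisfying xᵀα ≠ 0, then μ is an eigenvalue of L_K^ρ of multiplicity 1 and every μ-eigenvector β of L_K^ρ satisfies β(v) = 0. -/

import Mathlib

open Matrix

noncomputable def mult {ι : Type*} [Fintype ι] [DecidableEq ι]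
    (M : Matrix ι ι ℝ) (μ : ℝ) : ℕ :=
  Module.finrank ℝ (Module.End.eigenspace (Matrix.toLin' M) μ)

noncomputable def rsd {ι : Type*} [Fintype ι] [DecidableEq ι]
    (M : Matrix ι ι ℝ) : Matrix ι ι ℝ :=
  Matrix.diagonal (fun i => ∑ j, M i j)

/-- The generalized Laplacian `L_A^ρ = D(A) - ρ A`. -/
noncomputable def genLap {ι : Type*} [Fintype ι] [DecidableEq ι]
    (ρ : ℝ) (M : Matrix ι ι ℝ) : Matrix ι ι ℝ :=
  rsd M - ρ • M

/-- The matrix `K = [[H, x, 0], [xᵀ, a, xᵀ], [0, x, H]]`: two copies of `H` attached to a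
central index `v` (the `Unit` summand) via `x`. -/
noncomputable def doubled {n : ℕ} (H : Matrix (Fin n) (Fin n) ℝ) (x : Fin n → ℝ)
    (a : ℝ) : Matrix (Fin n ⊕ Unit ⊕ Fin n) (Fin n ⊕ Unit ⊕ Fin n) ℝ :=
  Matrix.of fun p q =>
    match p, q with
    | Sum.inl i, Sum.inl j => H i j
    | Sum.inl i, Sum.inr (Sum.inl _) => x i
    | Sum.inl _, Sum.inr (Sum.inr _) => 0
    | Sum.inr (Sum.inl _), Sum.inl j => x j
    | Sum.inr (Sum.inl _), Sum.inr (Sum.inl _) => a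
    | Sum.inr (Sum.inl _), Sum.inr (Sum.inr j) => x j
    | Sum.inr (Sum.inr _), Sum.inl _ => 0
    | Sum.inr (Sum.inr i), Sum.inr (Sum.inl _) => x i
    | Sum.inr (Sum.inr i), Sum.inr (Sum.inr j) => H i j

lemma genLap_mulVec {ι : Type*} [Fintype ι] [DecidableEq ι] (ρ : ℝ)
    (M : Matrix ι ι ℝ) (v : ι → ℝ) (i : ι) :
    (genLap ρ M).mulVec v i = (∑ j, M i j) * v i - ρ * ∑ j, M i j * v j := by
  have : (genLap ρ M).mulVec v i = (rsd M).mulVec v i - ρ * M.mulVec v i := by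
    simp [genLap, sub_mulVec, smul_mulVec]
  rw [this]
  simp [rsd, mulVec_diagonal]
  left; simp [mulVec, dotProduct]

lemma M_mulVec {n : ℕ} (ρ : ℝ) (H : Matrix (Fin n) (Fin n) ℝ) (x v : Fin n → ℝ) (i : Fin n) :
    (genLap ρ H + Matrix.diagonal x).mulVec v i
      = (∑ j, H i j) * v i - ρ * (∑ j, H i j * v j) + x i * v i := by
  rw [add_mulVec, Pi.add_apply, genLap_mulVec, mulVec_diagonal]

section
variable {n : ℕ} (a ρ : ℝ) (H : Matrix (Fin n) (Fin n) ℝ) (x : Fin n → ℝ)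
  (β : Fin n ⊕ Unit ⊕ Fin n → ℝ)

lemma Kmul_inl (i : Fin n) :
    (genLap ρ (doubled H x a)).mulVec β (Sum.inl i)
      = (genLap ρ H + Matrix.diagonal x).mulVec (fun j => β (Sum.inl j)) i
        - ρ * x i * β (Sum.inr (Sum.inl ())) := by
  rw [genLap_mulVec, M_mulVec]
  simp [doubled, Fintype.sum_sum_type]
  ring

lemma Kmul_inrr (i : Fin n) :
    (genLap ρ (doubled H x a)).mulVec β (Sum.inr (Sum.inr i))
      = (genLap ρ H + Matrix.diagonal x).mulVec (fun j => β (Sum.inr (Sum.inr j))) i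
        - ρ * x i * β (Sum.inr (Sum.inl ())) := by
  rw [genLap_mulVec, M_mulVec]
  simp [doubled, Fintype.sum_sum_type]
  ring

lemma Kmul_mid :
    (genLap ρ (doubled H x a)).mulVec β (Sum.inr (Sum.inl ()))
      = (2 * (∑ j, x j) + a) * β (Sum.inr (Sum.inl ()))
        - ρ * ((∑ j, x j * β (Sum.inl j)) + a * β (Sum.inr (Sum.inl ()))
            + (∑ j, x j * β (Sum.inr (Sum.inr j)))) := by
  rw [genLap_mulVec]
  simp [doubled, Fintype.sum_sum_type]
  ring
end

theorem stmt19 {n : ℕ} (a μ ρ : ℝ) (hρ : ρ ≠ 0)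
    (H : Matrix (Fin n) (Fin n) ℝ) (hH : H.IsSymm) (x : Fin n → ℝ)
    (hmult : mult (genLap ρ H + Matrix.diagonal x) μ = 1)
    (α : Fin n → ℝ) (hα0 : α ≠ 0)
    (hα : (genLap ρ H + Matrix.diagonal x).mulVec α = μ • α)
    (hxα : ∑ i, x i * α i ≠ 0) :
    mult (genLap ρ (doubled H x a)) μ = 1 ∧
      ∀ β : Fin n ⊕ Unit ⊕ Fin n → ℝ,
        (genLap ρ (doubled H x a)).mulVec β = μ • β → β (Sum.inr (Sum.inl ())) = 0 := by
  set M := genLap ρ H + Matrix.diagonal x with hMdef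
  -- symmetry of M
  have hMsymm : ∀ i j, M i j = M j i := by
    intro i j
    have h1 : Mᵀ = M := by
      simp [hMdef, genLap, rsd, transpose_add, transpose_sub, transpose_smul,
        diagonal_transpose, hH.eq]
    have := congrFun (congrFun h1 j) i
    simpa [transpose_apply] using this
  have hsym : ∀ v w : Fin n → ℝ,
      ∑ i, v i * M.mulVec w i = ∑ i, M.mulVec v i * w i := by
    intro v w
    simp only [mulVec, dotProduct]
    have : ∀ i, v i * ∑ j, M i j * w j = ∑ j, v i * (M i j * w j) := by
      intro i; rw [Finset.mul_sum]
    simp only [this]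
    have : ∀ i, (∑ j, M i j * v j) * w i = ∑ j, M i j * v j * w i := by
      intro i; rw [Finset.sum_mul]
    simp only [this]
    rw [Finset.sum_comm]
    apply Finset.sum_congr rfl; intro i _
    apply Finset.sum_congr rfl; intro j _
    rw [hMsymm j i]; ring
  have hαi : ∀ i, M.mulVec α i = μ * α i := by
    intro i; rw [hα]; rfl
  -- eigenspace of M is span of α
  have hαmem : α ∈ Module.End.eigenspace (Matrix.toLin' M) μ := by
    rw [Module.End.mem_eigenspace_iff, Matrix.toLin'_apply]; exact hα
  have hspan : (Submodule.span ℝ {α}) = Module.End.eigenspace (Matrix.toLin' M) μ := by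
    apply Submodule.eq_of_le_of_finrank_le
    · rwa [Submodule.span_singleton_le_iff_mem]
    · rw [finrank_span_singleton hα0]
      exact le_of_eq hmult
  have hMeig : ∀ v : Fin n → ℝ, M.mulVec v = μ • v → ∃ t : ℝ, v = t • α := by
    intro v hv
    have hv' : v ∈ Submodule.span ℝ {α} := by
      rw [hspan, Module.End.mem_eigenspace_iff, Matrix.toLin'_apply]; exact hv
    obtain ⟨t, ht⟩ := Submodule.mem_span_singleton.mp hv'
    exact ⟨t, ht.symm⟩
  -- the distinguished eigenvector of K
  set β₀ : Fin n ⊕ Unit ⊕ Fin n → ℝ :=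
    Sum.elim α (Sum.elim (fun _ => 0) (fun i => -α i)) with hβ₀def
  have hβ₀0 : β₀ ≠ 0 := by
    intro h
    apply hα0
    funext i
    have := congrFun h (Sum.inl i)
    simpa [hβ₀def] using this
  -- β₀ is an eigenvector of genLap ρ K
  have hβ₀eig : (genLap ρ (doubled H x a)).mulVec β₀ = μ • β₀ := by
    funext p
    rcases p with i | u | i
    · rw [Kmul_inl]
      have : (fun j => β₀ (Sum.inl j)) = α := by funext j; simp [hβ₀def]
      rw [this]
      simp [hβ₀def, ← hMdef, hαi i]
    · cases u
      rw [Kmul_mid]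
      have h1 : ∑ j, x j * β₀ (Sum.inl j) = ∑ j, x j * α j := by
        apply Finset.sum_congr rfl; intro j _; simp [hβ₀def]
      have h2 : ∑ j, x j * β₀ (Sum.inr (Sum.inr j)) = -∑ j, x j * α j := by
        rw [← Finset.sum_neg_distrib]
        apply Finset.sum_congr rfl; intro j _; simp [hβ₀def]
      rw [h1, h2]
      simp [hβ₀def]
    · rw [Kmul_inrr]
      have : (fun j => β₀ (Sum.inr (Sum.inr j))) = fun j => -α j := by
        funext j; simp [hβ₀def]
      rw [this]
      have hneg : M.mulVec (fun j => -α j) i = -(M.mulVec α i) := by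
        simp [mulVec, dotProduct, Finset.sum_neg_distrib]
      simp [hβ₀def, ← hMdef, hneg, hαi i]
  -- main analysis of an arbitrary eigenvector
  have hmain : ∀ β : Fin n ⊕ Unit ⊕ Fin n → ℝ,
      (genLap ρ (doubled H x a)).mulVec β = μ • β →
      β (Sum.inr (Sum.inl ())) = 0 ∧ ∃ t : ℝ, β = t • β₀ := by
    intro β hβ
    set c := β (Sum.inr (Sum.inl ())) with hcdef
    set β₁ : Fin n → ℝ := fun j => β (Sum.inl j) with hβ₁def
    set β₂ : Fin n → ℝ := fun j => β (Sum.inr (Sum.inr j)) with hβ₂def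
    have E1 : ∀ i, M.mulVec β₁ i = μ * β₁ i + ρ * x i * c := by
      intro i
      have h := congrFun hβ (Sum.inl i)
      rw [Kmul_inl] at h
      have h' : M.mulVec β₁ i - ρ * x i * c = μ * β₁ i := h
      linarith
    have E2 : ∀ i, M.mulVec β₂ i = μ * β₂ i + ρ * x i * c := by
      intro i
      have h := congrFun hβ (Sum.inr (Sum.inr i))
      rw [Kmul_inrr] at h
      have h' : M.mulVec β₂ i - ρ * x i * c = μ * β₂ i := h
      linarith
    have E3 : (2 * (∑ j, x j) + a) * c
        - ρ * ((∑ j, x j * β₁ j) + a * c + (∑ j, x j * β₂ j)) = μ * c := by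
      have h := congrFun hβ (Sum.inr (Sum.inl ()))
      rw [Kmul_mid] at h
      exact h
    -- the sum s = β₁ + β₂
    set s : Fin n → ℝ := fun j => β₁ j + β₂ j with hsdef
    have Es : ∀ i, M.mulVec s i = μ * s i + 2 * ρ * c * x i := by
      intro i
      have hadd : M.mulVec s i = M.mulVec β₁ i + M.mulVec β₂ i := by
        simp [hsdef, mulVec, dotProduct, mul_add, Finset.sum_add_distrib]
      rw [hadd, E1, E2, hsdef]; ring
    -- c = 0 via symmetry
    have hkey : 2 * ρ * c * (∑ i, x i * α i) = 0 := by
      have h1 : ∑ i, α i * M.mulVec s i = ∑ i, M.mulVec α i * s i := hsym α s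
      have h2 : ∑ i, α i * M.mulVec s i
          = μ * (∑ i, α i * s i) + 2 * ρ * c * (∑ i, x i * α i) := by
        rw [Finset.mul_sum, Finset.mul_sum, ← Finset.sum_add_distrib]
        apply Finset.sum_congr rfl; intro i _
        rw [Es i]; ring
      have h3 : ∑ i, M.mulVec α i * s i = μ * (∑ i, α i * s i) := by
        rw [Finset.mul_sum]
        apply Finset.sum_congr rfl; intro i _
        rw [hαi i]; ring
      rw [h2, h3] at h1
      linarith
    have hc : c = 0 := by
      rcases mul_eq_zero.mp hkey with h | h
      · rcases mul_eq_zero.mp h with h' | h'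
        · rcases mul_eq_zero.mp h' with h'' | h''
          · norm_num at h''
          · exact absurd h'' hρ
        · exact h'
      · exact absurd h hxα
    refine ⟨hc, ?_⟩
    -- now β₁, β₂ are eigenvectors of M
    have hβ₁eig : M.mulVec β₁ = μ • β₁ := by
      funext i; rw [E1 i, hc]; simp
    have hβ₂eig : M.mulVec β₂ = μ • β₂ := by
      funext i; rw [E2 i, hc]; simp
    obtain ⟨t₁, ht₁⟩ := hMeig β₁ hβ₁eig
    obtain ⟨t₂, ht₂⟩ := hMeig β₂ hβ₂eig
    -- from the central equation, t₂ = -t₁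
    have hsum : (∑ j, x j * β₁ j) + (∑ j, x j * β₂ j) = 0 := by
      rw [hc] at E3
      simp at E3
      rcases E3 with h | h
      · exact absurd h hρ
      · linarith
    have hsx : ∀ (t : ℝ) (v : Fin n → ℝ), v = t • α → ∑ j, x j * v j = t * ∑ j, x j * α j := by
      intro t v hv
      rw [Finset.mul_sum]
      apply Finset.sum_congr rfl; intro j _
      rw [hv]; simp [Pi.smul_apply]; ring
    rw [hsx t₁ β₁ ht₁, hsx t₂ β₂ ht₂] at hsum
    have ht : t₂ = -t₁ := by
      have : (t₁ + t₂) * (∑ j, x j * α j) = 0 := by linarith [hsum]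
      rcases mul_eq_zero.mp this with h | h
      · linarith
      · exact absurd h hxα
    refine ⟨t₁, ?_⟩
    funext p
    rcases p with i | u | i
    · have := congrFun ht₁ i
      simpa [hβ₀def] using this
    · cases u
      simp [hβ₀def, ← hcdef, hc]
    · have := congrFun ht₂ i
      rw [ht] at this
      simp only [hβ₂def] at this
      simp [hβ₀def, this]
  constructor
  · -- multiplicity 1
    have heq : Module.End.eigenspace (Matrix.toLin' (genLap ρ (doubled H x a))) μ
        = Submodule.span ℝ {β₀} := by
      apply le_antisymm
      · intro β hβ
        rw [Module.End.mem_eigenspace_iff, Matrix.toLin'_apply] at hβ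
        obtain ⟨-, t, ht⟩ := hmain β hβ
        rw [Submodule.mem_span_singleton]
        exact ⟨t, ht.symm⟩
      · rw [Submodule.span_singleton_le_iff_mem,
          Module.End.mem_eigenspace_iff, Matrix.toLin'_apply]
        exact hβ₀eig
    rw [mult, heq, finrank_span_singleton hβ₀0]
  · intro β hβ
    exact (hmain β hβ).1
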